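/- Let Z be an ACM fat point scheme in ℙ¹×ℙ¹ with defining ideal I_Z = ⋂_{m_{ij} ≥ 1} (L_i, R_j)^{m_{ij}}, and let P_i × Q_j be a point of its support with multiplicity m = m_{ij} ≥ 1. Let Z' be the scheme obtained by replacing m_{ij} with m − 1, and set a_ℓ = Σ_{s=1}^a (m_{sj} − ℓ)_+ and b_ℓ = Σ_{p=1}^b (m_{ip} − ℓ)_+ for ℓ = 0,…,m−1. Then every bihomogeneous form F ∈ I_{Z'} \ I_Z of bidegree (c,d) satisfies (c,d) ⪰ (a_{m−1−ℓ} − 1, b_ℓ − 1) (componentwise) for some ℓ ∈ {0,…,m−1}. -/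

import Mathlib

open MvPolynomial

/-- `F` is bihomogeneous of bidegree `(c, d)` in `k[x₀,x₁,y₀,y₁]`, where the variables are
indexed by `Fin 4` with `x₀ = X 0`, `x₁ = X 1`, `y₀ = X 2`, `y₁ = X 3`. -/
def IsBihom {k : Type*} [CommSemiring k] (c d : ℕ) (F : MvPolynomial (Fin 4) k) : Prop :=
  ∀ s ∈ F.support, s 0 + s 1 = c ∧ s 2 + s 3 = d

/-- Two polynomials are non-proportional: neither is a scalar multiple of the other. -/
def NonPropPoly {k : Type*} [CommSemiring k] (F G : MvPolynomial (Fin 4) k) : Prop :=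
  (∀ c : k, F ≠ c • G) ∧ (∀ c : k, G ≠ c • F)

namespace SepProof
variable {k : Type*} [Field k]

/-- extraction of the part of `P` whose exponent at variable `a` equals `h`. -/
noncomputable def E (a : Fin 4) (h : ℕ) (P : MvPolynomial (Fin 4) k) : MvPolynomial (Fin 4) k :=
  ∑ s ∈ P.support.filter (fun s => s a = h), monomial s (coeff s P)

lemma coeff_E (a : Fin 4) (h : ℕ) (P : MvPolynomial (Fin 4) k) (u : Fin 4 →₀ ℕ) :
    coeff u (E a h P) = if u a = h then coeff u P else 0 := by
  classical
  rw [E, coeff_sum]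
  have : ∀ s ∈ P.support.filter (fun s => s a = h), coeff u (monomial s (coeff s P))
      = if s = u then coeff s P else 0 := fun s _ => coeff_monomial u s _
  rw [Finset.sum_congr rfl this, Finset.sum_ite_eq' _ u (fun s => coeff s P)]
  by_cases h1 : u a = h
  · by_cases h2 : u ∈ P.support
    · simp [Finset.mem_filter, h1, h2]
    · simp only [notMem_support_iff] at h2
      simp [Finset.mem_filter, h1, h2]
  · simp [Finset.mem_filter, h1]

lemma mem_support_E {a : Fin 4} {h : ℕ} {P : MvPolynomial (Fin 4) k} {u : Fin 4 →₀ ℕ} :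
    u ∈ (E a h P).support ↔ u ∈ P.support ∧ u a = h := by
  classical
  simp only [mem_support_iff, coeff_E]
  by_cases h1 : u a = h <;> simp [h1]

lemma E_add (a : Fin 4) (h : ℕ) (P Q : MvPolynomial (Fin 4) k) :
    E a h (P + Q) = E a h P + E a h Q := by
  ext u
  simp only [coeff_add, coeff_E]
  split_ifs <;> simp

lemma E_monomial (a : Fin 4) (h : ℕ) (s : Fin 4 →₀ ℕ) (r : k) :
    E a h (monomial s r) = if s a = h then monomial s r else 0 := by
  classical
  ext u
  rw [coeff_E]
  split_ifs with h1 h2 h2 <;>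
    simp only [coeff_monomial, coeff_zero] <;> split_ifs with h3 <;> try rfl
  · subst h3; exact absurd h1 h2
  · subst h3; exact absurd h2 h1

/-- if all exponents at `a` are at least `t`, then `X a ^ t` divides. -/
lemma X_pow_dvd_of_support (a : Fin 4) (t : ℕ) (P : MvPolynomial (Fin 4) k)
    (hP : ∀ s ∈ P.support, t ≤ s a) : (X a : MvPolynomial (Fin 4) k) ^ t ∣ P := by
  classical
  refine ⟨∑ s ∈ P.support, monomial (s - Finsupp.single a t) (coeff s P), ?_⟩
  conv_lhs => rw [← support_sum_monomial_coeff P]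
  rw [Finset.mul_sum]
  refine Finset.sum_congr rfl fun s hs => ?_
  rw [X_pow_eq_monomial, monomial_mul, one_mul]
  have hseq : Finsupp.single a t + (s - Finsupp.single a t) = s := by
    ext i
    by_cases hi : i = a
    · subst hi
      simp only [Finsupp.add_apply, Finsupp.single_eq_same, Finsupp.tsub_apply]
      have := hP s hs
      omega
    · simp [Finsupp.add_apply, Finsupp.single_apply, Ne.symm hi, Finsupp.tsub_apply]
  rw [hseq]


/-- the ideal of polynomials all of whose monomials have `s a + s b ≥ n`. -/
def degIdeal (a b : Fin 4) (n : ℕ) : Ideal (MvPolynomial (Fin 4) k) where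
  carrier := {F | ∀ s ∈ F.support, n ≤ s a + s b}
  zero_mem' := by simp
  add_mem' := by
    classical
    intro P Q hP hQ s hs
    rcases Finset.mem_union.mp (MvPolynomial.support_add hs) with h | h
    exacts [hP s h, hQ s h]
  smul_mem' := by
    classical
    intro r P hP s hs
    rw [smul_eq_mul] at hs
    rcases Finset.mem_add.mp (MvPolynomial.support_mul r P hs) with ⟨u, hu, v, hv, rfl⟩
    have := hP v hv
    simp only [Finsupp.add_apply]
    omega

lemma span_le_degIdeal (a b : Fin 4) :
    Ideal.span {(X a : MvPolynomial (Fin 4) k), X b} ≤ degIdeal a b 1 := by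
  classical
  intro F hF
  rcases Ideal.mem_span_pair.mp hF with ⟨p, q, rfl⟩
  intro s hs
  rcases Finset.mem_union.mp (MvPolynomial.support_add hs) with h | h
  · rcases Finset.mem_add.mp (MvPolynomial.support_mul p (X a) h) with ⟨u, hu, v, hv, rfl⟩
    have hv' : v = Finsupp.single a 1 := by
      have := MvPolynomial.support_X (R := k) (n := a) ▸ hv
      simpa using this
    subst hv'
    simp only [Finsupp.add_apply, Finsupp.single_apply]
    split_ifs <;> omega
  · rcases Finset.mem_add.mp (MvPolynomial.support_mul q (X b) h) with ⟨u, hu, v, hv, rfl⟩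
    have hv' : v = Finsupp.single b 1 := by
      have := MvPolynomial.support_X (R := k) (n := b) ▸ hv
      simpa using this
    subst hv'
    simp only [Finsupp.add_apply, Finsupp.single_apply]
    split_ifs <;> omega

lemma pow_le_degIdeal (a b : Fin 4) (n : ℕ) :
    (Ideal.span {(X a : MvPolynomial (Fin 4) k), X b}) ^ n ≤ degIdeal a b n := by
  classical
  induction n with
  | zero => intro F _ s _; omega
  | succ n ih =>
    rw [pow_succ]
    rw [Ideal.mul_le]
    intro r hr t ht s hs
    rcases Finset.mem_add.mp (MvPolynomial.support_mul r t hs) with ⟨u, hu, v, hv, rfl⟩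
    have h1 := ih hr u hu
    have h2 := span_le_degIdeal a b ht v hv
    simp only [Finsupp.add_apply]
    omega

lemma mem_span_pow_of_support {a b : Fin 4} (hab : a ≠ b) {n : ℕ} {F : MvPolynomial (Fin 4) k}
    (h : ∀ s ∈ F.support, n ≤ s a + s b) :
    F ∈ (Ideal.span {(X a : MvPolynomial (Fin 4) k), X b}) ^ n := by
  classical
  rw [← support_sum_monomial_coeff F]
  refine Ideal.sum_mem _ fun s hs => ?_
  have key : monomial s (coeff s F) =
      X a ^ s a * X b ^ s b * monomial (s - Finsupp.single a (s a) - Finsupp.single b (s b)) (coeff s F) := by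
    rw [X_pow_eq_monomial, X_pow_eq_monomial, monomial_mul, monomial_mul, one_mul, one_mul]
    have hseq : ((Finsupp.single a (s a) + Finsupp.single b (s b))
        + (s - Finsupp.single a (s a) - Finsupp.single b (s b))) = s := by
      ext i
      simp only [Finsupp.add_apply, Finsupp.single_apply, Finsupp.tsub_apply]
      by_cases hia : a = i <;> by_cases hib : b = i <;>
        first
        | (exfalso; exact hab (hia.trans hib.symm))
        | simp [hia, hib] <;> omega
    rw [hseq]
  rw [key]
  refine Ideal.mul_mem_right _ _ ?_
  have h1 : (X a : MvPolynomial (Fin 4) k) ^ s a ∈ (Ideal.span {(X a : MvPolynomial (Fin 4) k), X b}) ^ (s a) :=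
    Ideal.pow_mem_pow (Ideal.subset_span (by simp)) _
  have h2 : (X b : MvPolynomial (Fin 4) k) ^ s b ∈ (Ideal.span {(X a : MvPolynomial (Fin 4) k), X b}) ^ (s b) :=
    Ideal.pow_mem_pow (Ideal.subset_span (by simp)) _
  have h3 := Ideal.mul_mem_mul h1 h2
  rw [← pow_add] at h3
  exact Ideal.pow_le_pow_right (h s hs) h3

lemma mem_span_pow_iff {a b : Fin 4} (hab : a ≠ b) {n : ℕ} {F : MvPolynomial (Fin 4) k} :
    F ∈ (Ideal.span {(X a : MvPolynomial (Fin 4) k), X b}) ^ n ↔ ∀ s ∈ F.support, n ≤ s a + s b :=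
  ⟨fun h => pow_le_degIdeal a b n h, mem_span_pow_of_support hab⟩


lemma support_linear {a b : Fin 4} (α β : k) {u : Fin 4 →₀ ℕ}
    (hu : u ∈ (C α * X a + C β * X b : MvPolynomial (Fin 4) k).support) :
    u = Finsupp.single a 1 ∨ u = Finsupp.single b 1 := by
  classical
  have h1 : (C α * X a : MvPolynomial (Fin 4) k) = monomial (Finsupp.single a 1) α := by
    rw [X, C_mul_monomial, mul_one]
  have h2 : (C β * X b : MvPolynomial (Fin 4) k) = monomial (Finsupp.single b 1) β := by
    rw [X, C_mul_monomial, mul_one]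
  rcases Finset.mem_union.mp (MvPolynomial.support_add hu) with h | h
  · left
    rw [h1] at h
    have := MvPolynomial.support_monomial_subset h
    simpa using this
  · right
    rw [h2] at h
    have := MvPolynomial.support_monomial_subset h
    simpa using this

/-- decomposition of a `(1,0)`-form (resp. `(0,1)`-form via `a = 2, b = 3`). -/
lemma form_decomp {P : MvPolynomial (Fin 4) k} {a b : Fin 4}
    (hss : ∀ s ∈ P.support, s = Finsupp.single a 1 ∨ s = Finsupp.single b 1) (hab : a ≠ b) :
    P = C (coeff (Finsupp.single a 1) P) * X a + C (coeff (Finsupp.single b 1) P) * X b := by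
  classical
  have h1 : ∀ (γ : k) (i : Fin 4), (C γ * X i : MvPolynomial (Fin 4) k) = monomial (Finsupp.single i 1) γ := by
    intro γ i; rw [X, C_mul_monomial, mul_one]
  rw [h1, h1]
  have hab' : Finsupp.single a (1:ℕ) ≠ Finsupp.single b 1 := by
    intro h
    rcases (Finsupp.single_eq_single_iff _ _ _ _).mp h with ⟨h', _⟩ | ⟨h', _⟩
    · exact hab h'
    · exact one_ne_zero h'
  ext u
  simp only [coeff_add, coeff_monomial]
  by_cases h2 : Finsupp.single a 1 = u
  · rw [if_pos h2, if_neg (fun h3 => hab' (h2.trans h3.symm)), h2, add_zero]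
  · by_cases h3 : Finsupp.single b 1 = u
    · rw [if_neg h2, if_pos h3, zero_add, h3]
    · rw [if_neg h2, if_neg h3]
      have hu : u ∉ P.support := fun hu => by
        rcases hss u hu with h | h
        · exact h2 h.symm
        · exact h3 h.symm
      rw [notMem_support_iff] at hu
      rw [hu, add_zero]

lemma bihom_support_single {P : MvPolynomial (Fin 4) k} (hP : IsBihom 1 0 P) :
    ∀ s ∈ P.support, s = Finsupp.single (0 : Fin 4) 1 ∨ s = Finsupp.single (1 : Fin 4) 1 := by
  intro s hs
  obtain ⟨h1, h2⟩ := hP s hs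
  have h0 : s 0 = 1 ∧ s 1 = 0 ∨ s 0 = 0 ∧ s 1 = 1 := by omega
  have h3 : s 2 = 0 ∧ s 3 = 0 := by omega
  rcases h0 with ⟨ha, hb⟩ | ⟨ha, hb⟩
  · left; ext i; fin_cases i <;> simp_all [Finsupp.single_apply] <;> rfl
  · right; ext i; fin_cases i <;> simp_all [Finsupp.single_apply] <;> rfl

lemma bihom_support_single' {P : MvPolynomial (Fin 4) k} (hP : IsBihom 0 1 P) :
    ∀ s ∈ P.support, s = Finsupp.single (2 : Fin 4) 1 ∨ s = Finsupp.single (3 : Fin 4) 1 := by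
  intro s hs
  obtain ⟨h1, h2⟩ := hP s hs
  have h0 : s 2 = 1 ∧ s 3 = 0 ∨ s 2 = 0 ∧ s 3 = 1 := by omega
  have h3 : s 0 = 0 ∧ s 1 = 0 := by omega
  rcases h0 with ⟨ha, hb⟩ | ⟨ha, hb⟩
  · left; ext i; fin_cases i <;> simp_all [Finsupp.single_apply] <;> rfl
  · right; ext i; fin_cases i <;> simp_all [Finsupp.single_apply] <;> rfl

lemma bih_add {c d : ℕ} {P Q : MvPolynomial (Fin 4) k} (hP : IsBihom c d P) (hQ : IsBihom c d Q) :
    IsBihom c d (P + Q) := by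
  classical
  intro s hs
  rcases Finset.mem_union.mp (MvPolynomial.support_add hs) with h | h
  exacts [hP s h, hQ s h]

lemma bih_zero {c d : ℕ} : IsBihom c d (0 : MvPolynomial (Fin 4) k) := by
  intro s hs; simp at hs

lemma bih_mul {c d c' d' : ℕ} {P Q : MvPolynomial (Fin 4) k} (hP : IsBihom c d P) (hQ : IsBihom c' d' Q) :
    IsBihom (c + c') (d + d') (P * Q) := by
  classical
  intro s hs
  rcases Finset.mem_add.mp (MvPolynomial.support_mul P Q hs) with ⟨u, hu, v, hv, rfl⟩
  obtain ⟨h1, h2⟩ := hP u hu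
  obtain ⟨h3, h4⟩ := hQ v hv
  simp only [Finsupp.add_apply]
  omega

lemma bih_pow {c d : ℕ} {P : MvPolynomial (Fin 4) k} (hP : IsBihom c d P) (n : ℕ) :
    IsBihom (n * c) (n * d) (P ^ n) := by
  induction n with
  | zero =>
    intro s hs
    simp only [pow_zero] at hs
    have hC : s ∈ ((monomial 0 1 : MvPolynomial (Fin 4) k)).support := by
      simpa [monomial_zero', C_1] using hs
    have := MvPolynomial.support_monomial_subset hC
    simp only [Finset.mem_singleton] at this
    subst this; simp
  | succ n ih =>
    rw [pow_succ, Nat.succ_mul, Nat.succ_mul]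
    exact bih_mul ih hP

lemma bih_C {r : k} : IsBihom 0 0 (C r : MvPolynomial (Fin 4) k) := by
  intro s hs
  rw [show (C r : MvPolynomial (Fin 4) k) = monomial 0 r from rfl] at hs
  have := MvPolynomial.support_monomial_subset hs
  simp only [Finset.mem_singleton] at this
  subst this; simp

lemma bih_sum {c d : ℕ} {ι : Type*} {S : Finset ι} {f : ι → MvPolynomial (Fin 4) k}
    (h : ∀ i ∈ S, IsBihom c d (f i)) : IsBihom c d (∑ i ∈ S, f i) := by
  classical
  induction S using Finset.induction with
  | empty => simpa using (bih_zero : IsBihom c d (0 : MvPolynomial (Fin 4) k))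
  | insert _ _ hni ih =>
    rw [Finset.sum_insert hni]
    exact bih_add (h _ (Finset.mem_insert_self _ _)) (ih fun i hi => h i (Finset.mem_insert_of_mem hi))

/-- bihomogeneity is preserved by substitution of `(1,0)`-forms for x-vars, `(0,1)` for y. -/
lemma bih_aeval {c d : ℕ} {v : Fin 4 → MvPolynomial (Fin 4) k}
    (hv0 : IsBihom 1 0 (v 0)) (hv1 : IsBihom 1 0 (v 1))
    (hv2 : IsBihom 0 1 (v 2)) (hv3 : IsBihom 0 1 (v 3))
    {P : MvPolynomial (Fin 4) k} (hP : IsBihom c d P) :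
    IsBihom c d (aeval v P) := by
  classical
  conv => rw [← support_sum_monomial_coeff P]
  rw [map_sum]
  refine bih_sum fun s hs => ?_
  rw [aeval_monomial, Finsupp.prod_fintype _ _ (fun i => pow_zero _), Fin.prod_univ_four]
  obtain ⟨h1, h2⟩ := hP s hs
  have e0 := bih_pow hv0 (s 0)
  have e1 := bih_pow hv1 (s 1)
  have e2 := bih_pow hv2 (s 2)
  have e3 := bih_pow hv3 (s 3)
  have key := bih_mul (bih_C (r := coeff s P)) (bih_mul (bih_mul (bih_mul e0 e1) e2) e3)
  have hc : 0 + (s 0 * 1 + s 1 * 1 + s 2 * 0 + s 3 * 0) = c := by omega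
  have hd : 0 + (s 0 * 0 + s 1 * 0 + s 2 * 1 + s 3 * 1) = d := by omega
  rw [hc, hd] at key
  simpa [MvPolynomial.algebraMap_eq] using key


/-- substitution fixing all variables except `a, b`. -/
noncomputable def subv (a b : Fin 4) (A B : MvPolynomial (Fin 4) k) : Fin 4 → MvPolynomial (Fin 4) k :=
  fun i => if i = a then A else if i = b then B else X i

lemma exists_det {α β : k} (h : ¬(α = 0 ∧ β = 0)) : ∃ α' β', α * β' - β * α' = 1 := by
  by_cases hα : α = 0
  · have hβ : β ≠ 0 := fun hb => h ⟨hα, hb⟩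
    exact ⟨-β⁻¹, 0, by simp [hα, hβ]⟩
  · exact ⟨0, α⁻¹, by simp [hα]⟩

lemma subv_a {a b : Fin 4} (A B : MvPolynomial (Fin 4) k) : subv a b A B a = A := by
  simp [subv]

lemma subv_b {a b : Fin 4} (hab : a ≠ b) (A B : MvPolynomial (Fin 4) k) : subv a b A B b = B := by
  simp [subv, Ne.symm hab]

lemma subv_other {a b i : Fin 4} (hia : i ≠ a) (hib : i ≠ b) (A B : MvPolynomial (Fin 4) k) :
    subv a b A B i = X i := by
  simp [subv, hia, hib]

lemma aeval_subv_lin {a b : Fin 4} (hab : a ≠ b) (A B : MvPolynomial (Fin 4) k) (γ δ : k) :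
    aeval (subv a b A B) (C γ * X a + C δ * X b) = C γ * A + C δ * B := by
  rw [map_add, map_mul, map_mul, aeval_C, aeval_C, aeval_X, aeval_X, subv_a, subv_b hab]
  rw [algebraMap_eq]

/-- the linear change of variables in the two variables `a, b`. -/
noncomputable def eq2 (a b : Fin 4) (hab : a ≠ b) (α β α' β' : k) (hdet : α * β' - β * α' = 1) :
    MvPolynomial (Fin 4) k ≃ₐ[k] MvPolynomial (Fin 4) k := by
  refine AlgEquiv.ofAlgHom
    (aeval (subv a b (C α * X a + C β * X b) (C α' * X a + C β' * X b)))
    (aeval (subv a b (C β' * X a + C (-β) * X b) (C (-α') * X a + C α * X b))) ?_ ?_ <;>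
  · apply MvPolynomial.algHom_ext
    intro i
    have h1 : (C α * C β' - C β * C α' : MvPolynomial (Fin 4) k) = 1 := by
      rw [← C_mul, ← C_mul, ← C_sub, hdet, C_1]
    rw [AlgHom.comp_apply, aeval_X, AlgHom.id_apply]
    by_cases hia : i = a
    · subst hia
      rw [subv_a, aeval_subv_lin hab]
      simp only [map_neg]
      linear_combination (X i : MvPolynomial (Fin 4) k) * h1
    · by_cases hib : i = b
      · subst hib
        rw [subv_b hab, aeval_subv_lin hab]
        simp only [map_neg]
        linear_combination (X i : MvPolynomial (Fin 4) k) * h1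
      · rw [subv_other hia hib, aeval_X, subv_other hia hib]

lemma eq2_apply (a b : Fin 4) (hab : a ≠ b) (α β α' β' : k) (hdet : α * β' - β * α' = 1)
    (P : MvPolynomial (Fin 4) k) :
    eq2 a b hab α β α' β' hdet P
      = aeval (subv a b (C α * X a + C β * X b) (C α' * X a + C β' * X b)) P := rfl

lemma eq2_X_a (a b : Fin 4) (hab : a ≠ b) (α β α' β' : k) (hdet : α * β' - β * α' = 1) :
    eq2 a b hab α β α' β' hdet (X a) = C α * X a + C β * X b := by
  rw [eq2_apply, aeval_X, subv_a]

lemma eq2_X_other (a b : Fin 4) (hab : a ≠ b) (α β α' β' : k) (hdet : α * β' - β * α' = 1)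
    (i : Fin 4) (hia : i ≠ a) (hib : i ≠ b) :
    eq2 a b hab α β α' β' hdet (X i) = X i := by
  rw [eq2_apply, aeval_X, subv_other hia hib]


lemma supA_mul {a : Fin 4} {p q : ℕ} {P Q : MvPolynomial (Fin 4) k}
    (hP : ∀ u ∈ P.support, u a = p) (hQ : ∀ u ∈ Q.support, u a = q) :
    ∀ u ∈ (P * Q).support, u a = p + q := by
  classical
  intro u hu
  rcases Finset.mem_add.mp (MvPolynomial.support_mul P Q hu) with ⟨x, hx, y, hy, rfl⟩
  simp only [Finsupp.add_apply]
  rw [hP x hx, hQ y hy]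

lemma supA_pow {a : Fin 4} {p : ℕ} {P : MvPolynomial (Fin 4) k}
    (hP : ∀ u ∈ P.support, u a = p) (n : ℕ) :
    ∀ u ∈ (P ^ n).support, u a = n * p := by
  induction n with
  | zero =>
    intro u hu
    rw [pow_zero] at hu
    rw [show (1 : MvPolynomial (Fin 4) k) = monomial 0 1 from rfl] at hu
    have := MvPolynomial.support_monomial_subset hu
    simp only [Finset.mem_singleton] at this
    subst this; simp
  | succ n ih =>
    rw [pow_succ]
    intro u hu
    have := supA_mul ih hP u hu
    rw [this]; ring

lemma E_eq_self_of {a : Fin 4} {h : ℕ} {T : MvPolynomial (Fin 4) k}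
    (hT : ∀ u ∈ T.support, u a = h) : E a h T = T := by
  ext u
  rw [coeff_E]
  by_cases hu : u a = h
  · rw [if_pos hu]
  · rw [if_neg hu]
    by_cases hm : u ∈ T.support
    · exact absurd (hT u hm) hu
    · rw [notMem_support_iff] at hm; rw [hm]

lemma E_eq_zero_of {a : Fin 4} {h : ℕ} {T : MvPolynomial (Fin 4) k}
    (hT : ∀ u ∈ T.support, u a ≠ h) : E a h T = 0 := by
  ext u
  rw [coeff_E, coeff_zero]
  by_cases hu : u a = h
  · rw [if_pos hu]
    by_cases hm : u ∈ T.support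
    · exact absurd hu (hT u hm)
    · rwa [notMem_support_iff] at hm
  · rw [if_neg hu]

/-- the extraction commutes with substitutions not involving the variable `a`. -/
lemma E_comm {a : Fin 4} {h : ℕ} {v : Fin 4 → MvPolynomial (Fin 4) k}
    (hva : v a = X a) (hv : ∀ i, i ≠ a → ∀ u ∈ (v i).support, u a = 0)
    (P : MvPolynomial (Fin 4) k) :
    E a h (aeval v P) = aeval v (E a h P) := by
  classical
  induction P using MvPolynomial.induction_on' with
  | add p q ihp ihq => rw [map_add, E_add, E_add, map_add, ihp, ihq]
  | monomial s r =>
    have hsup : ∀ u ∈ (aeval v (monomial s r)).support, u a = s a := by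
      rw [aeval_monomial, Finsupp.prod_fintype _ _ (fun i => pow_zero _), Fin.prod_univ_four]
      have e : ∀ i : Fin 4, ∀ u ∈ ((v i) ^ (s i)).support, u a = s i * (if i = a then 1 else 0) := by
        intro i
        by_cases hia : i = a
        · subst hia
          simp only [if_pos rfl, mul_one, hva]
          intro u hu
          have := MvPolynomial.support_monomial_subset (by
            rwa [X_pow_eq_monomial] at hu)
          simp only [Finset.mem_singleton] at this
          subst this; simp
        · simp only [if_neg hia, mul_zero]
          exact supA_pow (hv i hia) (s i)
      have eC : ∀ u ∈ ((algebraMap k (MvPolynomial (Fin 4) k)) r).support, u a = 0 := by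
        intro u hu
        rw [algebraMap_eq, show (C r : MvPolynomial (Fin 4) k) = monomial 0 r from rfl] at hu
        have := MvPolynomial.support_monomial_subset hu
        simp only [Finset.mem_singleton] at this
        subst this; simp
      intro u hu
      have key := supA_mul eC (supA_mul (supA_mul (supA_mul (e 0) (e 1)) (e 2)) (e 3)) u hu
      rw [key]
      fin_cases a <;> simp <;> ring
    rw [E_monomial]
    by_cases hs : s a = h
    · rw [if_pos hs, E_eq_self_of (fun u hu => (hsup u hu).trans hs)]
    · rw [if_neg hs, map_zero, E_eq_zero_of (fun u hu => (hsup u hu).symm ▸ hs)]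


lemma sum_count_le {α : Type*} [DecidableEq α] (T : Finset α) (M : Multiset α) :
    (∑ x ∈ T, M.count x) ≤ Multiset.card M := by
  have hcardsum : Multiset.card (∑ x ∈ T, (M.count x) • ({x} : Multiset α))
      = ∑ x ∈ T, M.count x := by
    induction T using Finset.induction with
    | empty => simp
    | insert _ _ h ih =>
      rw [Finset.sum_insert h, Finset.sum_insert h, Multiset.card_add, ih]
      simp
  have hle : (∑ x ∈ T, (M.count x) • ({x} : Multiset α)) ≤ M := by
    rw [Multiset.le_iff_count]
    intro y
    rw [Multiset.count_sum']
    have : ∀ x ∈ T, Multiset.count y ((M.count x) • ({x} : Multiset α))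
        = if y = x then M.count x else 0 := by
      intro x _
      rw [Multiset.count_nsmul, Multiset.count_singleton]
      split_ifs <;> simp
    rw [Finset.sum_congr rfl this, Finset.sum_ite_eq T y (fun x => M.count x)]
    split_ifs <;> simp
  have hcard := Multiset.card_le_card hle
  rw [← hcardsum]
  exact hcard

lemma key_count [Infinite k] {c : ℕ} {ι : Type*} [DecidableEq ι] (f : MvPolynomial (Fin 4) k)
    (hf0 : f ≠ 0)
    (hdeg : ∀ u ∈ f.support, u 0 + u 1 = c)
    (hinj : ∀ u ∈ f.support, ∀ u' ∈ f.support, u 0 = u' 0 → u = u')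
    (idx : Finset ι) (α β : ι → k) (hβ : ∀ s ∈ idx, β s ≠ 0)
    (hpair : ∀ s ∈ idx, ∀ s' ∈ idx, s ≠ s' → α s * β s' ≠ α s' * β s)
    (t : ι → ℕ) (r : ℕ)
    (hdvd : ∀ s ∈ idx, (C (α s) * X 0 + C (β s) * X 1) ^ t s ∣ f)
    (hX : (X 0 : MvPolynomial (Fin 4) k) ^ r ∣ f) :
    r + ∑ s ∈ idx, t s ≤ c := by
  classical
  obtain ⟨ε, hε⟩ := Infinite.exists_notMem_finset (idx.image fun s => -(α s) / (β s))
  have hcs : ∀ s ∈ idx, α s + ε * β s ≠ 0 := by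
    intro s hs hzero
    refine hε (Finset.mem_image.mpr ⟨s, hs, ?_⟩)
    have hb := hβ s hs
    have : -α s / β s = ε := by
      rw [div_eq_iff hb]; linear_combination -hzero
    exact this
  set q : Polynomial k := Polynomial.C ε * Polynomial.X + 1 with hq_def
  set g : Fin 4 → Polynomial k := fun i => if i = 0 then Polynomial.X else if i = 1 then q else 1
    with hg_def
  have hg0 : g 0 = Polynomial.X := by simp [hg_def]
  have hg1 : g 1 = q := by simp [hg_def]
  have hg2 : g 2 = 1 := by simp [hg_def]
  have hg3 : g 3 = 1 := by simp [hg_def]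
  have hexp : ∀ P : MvPolynomial (Fin 4) k, aeval g P
      = ∑ u ∈ P.support, Polynomial.C (coeff u P) * (Polynomial.X ^ (u 0) * q ^ (u 1)) := by
    intro P
    conv_lhs => rw [← support_sum_monomial_coeff P]
    rw [map_sum]
    refine Finset.sum_congr rfl fun u _ => ?_
    rw [aeval_monomial, Finsupp.prod_fintype _ _ (fun i => pow_zero _), Fin.prod_univ_four,
      hg0, hg1, hg2, hg3]
    simp only [one_pow, mul_one]
    rw [Polynomial.algebraMap_eq]
  have hqdeg : q.natDegree ≤ 1 := by
    refine le_trans (Polynomial.natDegree_add_le _ _) ?_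
    simp only [Polynomial.natDegree_one]
    refine max_le (le_trans (Polynomial.natDegree_C_mul_le _ _) ?_) (by norm_num)
    simp [Polynomial.natDegree_X]
  have hndeg : (aeval g f).natDegree ≤ c := by
    rw [hexp]
    refine Polynomial.natDegree_sum_le_of_forall_le _ _ fun u hu => ?_
    refine le_trans (Polynomial.natDegree_mul_le) ?_
    rw [Polynomial.natDegree_C, zero_add]
    refine le_trans (Polynomial.natDegree_mul_le) ?_
    have h1 : (Polynomial.X ^ (u 0) : Polynomial k).natDegree ≤ u 0 := by
      simp [Polynomial.natDegree_X_pow]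
    have h2 : (q ^ (u 1)).natDegree ≤ u 1 := by
      refine le_trans Polynomial.natDegree_pow_le ?_
      calc u 1 * q.natDegree ≤ u 1 * 1 := Nat.mul_le_mul_left _ hqdeg
        _ = u 1 := mul_one _
    have := hdeg u hu
    omega
  -- nonvanishing
  have hf0' : (aeval g f) ≠ 0 := by
    obtain ⟨umin, humem, hmin⟩ := f.support.exists_min_image (fun u => u 0)
      (support_nonempty.mpr hf0)
    have hcoeff : (aeval g f).coeff (umin 0) = coeff umin f := by
      rw [hexp, Polynomial.finset_sum_coeff]
      rw [Finset.sum_eq_single umin]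
      · rw [show Polynomial.C (coeff umin f) * (Polynomial.X ^ (umin 0) * q ^ (umin 1))
            = Polynomial.X ^ (umin 0) * (Polynomial.C (coeff umin f) * q ^ (umin 1)) by ring]
        have hc0 := Polynomial.coeff_X_pow_mul (Polynomial.C (coeff umin f) * q ^ umin 1)
          (umin 0) 0
        rw [zero_add] at hc0
        rw [hc0, Polynomial.coeff_C_mul, Polynomial.coeff_zero_eq_eval_zero, Polynomial.eval_pow]
        simp [hq_def]
      · intro u hu hne
        have hlt : umin 0 < u 0 := by
          rcases lt_or_eq_of_le (hmin u hu) with h | h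
          · exact h
          · exact absurd (hinj u hu umin humem h.symm) hne
        have hdvd2 : (Polynomial.X : Polynomial k) ^ (u 0)
            ∣ Polynomial.C (coeff u f) * (Polynomial.X ^ (u 0) * q ^ (u 1)) :=
          ⟨Polynomial.C (coeff u f) * q ^ (u 1), by ring⟩
        exact Polynomial.X_pow_dvd_iff.mp hdvd2 _ hlt
      · intro h; exact absurd humem h
    intro h0
    rw [h0] at hcoeff
    simp only [Polynomial.coeff_zero] at hcoeff
    exact (mem_support_iff.mp humem) hcoeff.symm
  -- roots
  set rt : ι → k := fun s => -(β s) / (α s + ε * β s) with hrt_def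
  have hform : ∀ s ∈ idx, aeval g (C (α s) * X 0 + C (β s) * X 1)
      = Polynomial.C (α s + ε * β s) * (Polynomial.X - Polynomial.C (rt s)) := by
    intro s hs
    rw [map_add, map_mul, map_mul, aeval_C, aeval_C, aeval_X, aeval_X, hg0, hg1]
    have hCr : Polynomial.C (α s + ε * β s) * Polynomial.C (rt s) = Polynomial.C (-(β s)) := by
      rw [← Polynomial.C_mul]
      congr 1
      rw [hrt_def]
      simp only
      rw [mul_comm, div_mul_cancel₀ _ (hcs s hs)]
    simp only [Polynomial.algebraMap_eq]
    rw [mul_sub, hCr, map_neg, sub_neg_eq_add, Polynomial.C_add, Polynomial.C_mul, hq_def]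
    ring
  have hdvd' : ∀ s ∈ idx, (Polynomial.X - Polynomial.C (rt s)) ^ (t s) ∣ aeval g f := by
    intro s hs
    have h1 := map_dvd (aeval g) (hdvd s hs)
    rw [map_pow, hform s hs, mul_pow] at h1
    exact dvd_trans (Dvd.intro_left _ rfl) h1
  have hXdvd' : (Polynomial.X : Polynomial k) ^ r ∣ aeval g f := by
    have h1 := map_dvd (aeval g) hX
    rwa [map_pow, aeval_X, hg0] at h1
  have tcount : ∀ s ∈ idx, t s ≤ Polynomial.rootMultiplicity (rt s) (aeval g f) :=
    fun s hs => (Polynomial.le_rootMultiplicity_iff hf0').mpr (hdvd' s hs)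
  have rcount : r ≤ Polynomial.rootMultiplicity 0 (aeval g f) := by
    refine (Polynomial.le_rootMultiplicity_iff hf0').mpr ?_
    simpa using hXdvd'
  have h0notin : (0 : k) ∉ idx.image rt := by
    intro h
    rcases Finset.mem_image.mp h with ⟨s, hs, hrt0⟩
    rw [hrt_def] at hrt0
    simp only [div_eq_zero_iff, neg_eq_zero] at hrt0
    rcases hrt0 with h | h
    exacts [hβ s hs h, hcs s hs h]
  have hrtinj : ∀ s ∈ idx, ∀ s' ∈ idx, rt s = rt s' → s = s' := by
    intro s hs s' hs' heq
    by_contra hne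
    rw [hrt_def] at heq
    simp only at heq
    rw [div_eq_div_iff (hcs s hs) (hcs s' hs')] at heq
    have hgoal : α s * β s' = α s' * β s := by linear_combination heq
    exact hpair s hs s' hs' hne hgoal
  set M := (aeval g f).roots with hM
  calc r + ∑ s ∈ idx, t s
      ≤ M.count 0 + ∑ s ∈ idx, M.count (rt s) := by
        refine Nat.add_le_add ?_ (Finset.sum_le_sum fun s hs => ?_)
        · rw [hM, Polynomial.count_roots]; exact rcount
        · rw [hM, Polynomial.count_roots]; exact tcount s hs
    _ = ∑ x ∈ insert (0:k) (idx.image rt), M.count x := by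
        rw [Finset.sum_insert h0notin, Finset.sum_image hrtinj]
    _ ≤ Multiset.card M := sum_count_le _ _
    _ ≤ (aeval g f).natDegree := Polynomial.card_roots' _
    _ ≤ c := hndeg


lemma fin4_cases {i : Fin 4} (h0 : i ≠ 0) (h1 : i ≠ 1) (h2 : i ≠ 2) (h3 : i ≠ 3) : False := by
  rcases i with ⟨iv, hlt⟩
  interval_cases iv
  · exact h0 (Fin.ext rfl)
  · exact h1 (Fin.ext rfl)
  · exact h2 (Fin.ext rfl)
  · exact h3 (Fin.ext rfl)

lemma mem_span_pair_pow_map (e : MvPolynomial (Fin 4) k ≃ₐ[k] MvPolynomial (Fin 4) k)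
    {P Q F : MvPolynomial (Fin 4) k} {n : ℕ} (hF : F ∈ Ideal.span {P, Q} ^ n) :
    e F ∈ Ideal.span {e P, e Q} ^ n := by
  have h1 := Ideal.mem_map_of_mem (e : MvPolynomial (Fin 4) k →ₐ[k] MvPolynomial (Fin 4) k) hF
  rwa [Ideal.map_pow, Ideal.map_span, Set.image_insert_eq, Set.image_singleton] at h1

lemma cbound [Infinite k] {c d : ℕ} {G : MvPolynomial (Fin 4) k} (hGbih : IsBihom c d G)
    {h ℓ : ℕ} {sstar : Fin 4 →₀ ℕ} (hsmem : sstar ∈ G.support)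
    (hs0 : sstar 0 = h) (hs2 : sstar 2 = ℓ)
    (hmin : ∀ u ∈ G.support, h + ℓ ≤ u 0 + u 2)
    {ι : Type*} [DecidableEq ι] (idx : Finset ι) (Λ : ι → MvPolynomial (Fin 4) k) (t : ι → ℕ)
    (hforms : ∀ s ∈ idx, IsBihom 1 0 (Λ s))
    (hnpX : ∀ s ∈ idx, ∀ γ : k, Λ s ≠ γ • X 0)
    (hnp : ∀ s ∈ idx, ∀ s' ∈ idx, s ≠ s' → ∀ γ : k, Λ s ≠ γ • Λ s')
    (hmem : ∀ s ∈ idx, 1 ≤ t s → G ∈ Ideal.span {Λ s, X 2} ^ (t s + ℓ)) :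
    h + ∑ s ∈ idx, t s ≤ c := by
  classical
  set f := E 2 ℓ G with hf_def
  have hsupf : ∀ u, u ∈ f.support ↔ u ∈ G.support ∧ u 2 = ℓ := fun u => mem_support_E
  have hf0 : f ≠ 0 := by
    have : sstar ∈ f.support := (hsupf sstar).mpr ⟨hsmem, hs2⟩
    exact fun h0 => by simp [h0] at this
  have hdeg : ∀ u ∈ f.support, u 0 + u 1 = c := fun u hu =>
    (hGbih u ((hsupf u).mp hu).1).1
  have hinj : ∀ u ∈ f.support, ∀ u' ∈ f.support, u 0 = u' 0 → u = u' := by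
    intro u hu u' hu' h00
    obtain ⟨huG, hu2⟩ := (hsupf u).mp hu
    obtain ⟨huG', hu2'⟩ := (hsupf u').mp hu'
    obtain ⟨e1, e2⟩ := hGbih u huG
    obtain ⟨e1', e2'⟩ := hGbih u' huG'
    have g1 : u 1 = u' 1 := by omega
    have g2 : u 2 = u' 2 := hu2.trans hu2'.symm
    have g3 : u 3 = u' 3 := by omega
    ext i
    fin_cases i
    exacts [h00, g1, g2, g3]
  have hXdvd : (X 0 : MvPolynomial (Fin 4) k) ^ h ∣ f := by
    refine X_pow_dvd_of_support 0 h f fun u hu => ?_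
    obtain ⟨huG, hu2⟩ := (hsupf u).mp hu
    have := hmin u huG
    omega
  set αf : ι → k := fun s => coeff (Finsupp.single 0 1) (Λ s) with hαf
  set βf : ι → k := fun s => coeff (Finsupp.single 1 1) (Λ s) with hβf
  have hdecomp : ∀ s ∈ idx, Λ s = C (αf s) * X 0 + C (βf s) * X 1 := fun s hs =>
    form_decomp (bihom_support_single (hforms s hs)) (by decide)
  have hβ : ∀ s ∈ idx, βf s ≠ 0 := by
    intro s hs hb0
    refine hnpX s hs (αf s) ?_
    rw [hdecomp s hs, hb0, smul_eq_C_mul]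
    simp
  have hpair : ∀ s ∈ idx, ∀ s' ∈ idx, s ≠ s' → αf s * βf s' ≠ αf s' * βf s := by
    intro s hs s' hs' hne heq
    refine hnp s hs s' hs' hne (βf s / βf s') ?_
    have e1 : βf s / βf s' * αf s' = αf s := by
      rw [div_mul_eq_mul_div, mul_comm]
      rw [div_eq_iff (hβ s' hs')]
      linear_combination -heq
    have e2 : βf s / βf s' * βf s' = βf s := div_mul_cancel₀ _ (hβ s' hs')
    rw [hdecomp s hs, hdecomp s' hs', smul_eq_C_mul, mul_add, ← mul_assoc, ← mul_assoc,
      ← C_mul, ← C_mul, e1, e2]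
  have hdvd : ∀ s ∈ idx, (C (αf s) * X 0 + C (βf s) * X 1) ^ (t s) ∣ f := by
    intro s hs
    by_cases ht : 1 ≤ t s
    swap
    · rw [show t s = 0 by omega, pow_zero]; exact one_dvd _
    have hGmem := hmem s hs ht
    obtain ⟨α', β', hdet⟩ := exists_det (α := αf s) (β := βf s)
      (fun hc => hβ s hs hc.2)
    set χ := eq2 0 1 (by decide) (αf s) (βf s) α' β' hdet with hχ
    have hχX0 : χ (X 0) = Λ s := by
      rw [hχ, eq2_X_a, ← hdecomp s hs]
    have hχX2 : χ (X 2) = X 2 := by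
      rw [hχ, eq2_X_other _ _ _ _ _ _ _ _ _ (by decide) (by decide)]
    have hsymm0 : χ.symm (Λ s) = X 0 := by
      rw [← hχX0, AlgEquiv.symm_apply_apply]
    have hsymm2 : χ.symm (X 2) = X 2 := by
      have h2x := χ.symm_apply_apply (X 2)
      rwa [hχX2] at h2x
    have hG2 : χ.symm G ∈ Ideal.span {(X 0 : MvPolynomial (Fin 4) k), X 2} ^ (t s + ℓ) := by
      have := mem_span_pair_pow_map χ.symm hGmem
      rwa [hsymm0, hsymm2] at this
    have hcrit := (mem_span_pow_iff (by decide)).mp hG2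
    have hdvd0 : (X 0 : MvPolynomial (Fin 4) k) ^ (t s) ∣ E 2 ℓ (χ.symm G) := by
      refine X_pow_dvd_of_support 0 (t s) _ fun u hu => ?_
      obtain ⟨huG, hu2⟩ := (mem_support_E).mp hu
      have := hcrit u huG
      omega
    have hmap := map_dvd (χ : MvPolynomial (Fin 4) k →ₐ[k] MvPolynomial (Fin 4) k) hdvd0
    rw [map_pow] at hmap
    have hcomm : χ (E 2 ℓ (χ.symm G)) = E 2 ℓ G := by
      have hv2 : subv 0 1 (C (αf s) * X 0 + C (βf s) * X 1) (C α' * X 0 + C β' * X 1) 2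
          = X 2 := subv_other (by decide) (by decide) _ _
      have hv : ∀ i, i ≠ 2 → ∀ u ∈ ((subv 0 1 (C (αf s) * X 0 + C (βf s) * X 1)
          (C α' * X 0 + C β' * X 1)) i).support, u 2 = 0 := by
        intro i hi u hu
        by_cases h0 : i = 0
        · subst h0
          rw [subv_a] at hu
          rcases support_linear _ _ hu with h' | h' <;> subst h' <;>
            simp [Finsupp.single_apply]
        · by_cases h1 : i = 1
          · subst h1
            rw [subv_b (by decide)] at hu
            rcases support_linear _ _ hu with h' | h' <;> subst h' <;>
              simp [Finsupp.single_apply]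
          · by_cases h3 : i = 3
            · subst h3
              rw [subv_other (by decide) (by decide)] at hu
              have := MvPolynomial.support_X (R := k) (n := (3 : Fin 4)) ▸ hu
              simp only [Finset.mem_singleton] at this
              subst this
              simp [Finsupp.single_apply]
            · exact absurd (fin4_cases h0 h1 hi h3) not_false
      have hE := E_comm (a := 2) (h := ℓ) hv2 hv (χ.symm G)
      have h9 : χ (χ.symm G) = G := χ.apply_symm_apply G
      calc χ (E 2 ℓ (χ.symm G)) = E 2 ℓ (χ (χ.symm G)) := hE.symm
        _ = E 2 ℓ G := by rw [h9]
    have : Λ s ^ (t s) ∣ f := by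
      rw [hf_def, ← hcomm, ← hχX0]
      exact hmap
    rwa [hdecomp s hs] at this
  exact key_count f hf0 hdeg hinj idx αf βf hβ hpair t h hdvd hXdvd

lemma bih_lin01 (γ δ : k) : IsBihom 1 0 (C γ * X 0 + C δ * X 1 : MvPolynomial (Fin 4) k) := by
  intro u hu
  rcases support_linear _ _ hu with h' | h' <;> subst h' <;> simp [Finsupp.single_apply]

lemma bih_lin23 (γ δ : k) : IsBihom 0 1 (C γ * X 2 + C δ * X 3 : MvPolynomial (Fin 4) k) := by
  intro u hu
  rcases support_linear _ _ hu with h' | h' <;> subst h' <;> simp [Finsupp.single_apply]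

lemma bih_X_x (i : Fin 4) (hi : i = 0 ∨ i = 1) : IsBihom 1 0 (X i : MvPolynomial (Fin 4) k) := by
  intro u hu
  have := MvPolynomial.support_X (R := k) (n := i) ▸ hu
  simp only [Finset.mem_singleton] at this
  subst this
  rcases hi with rfl | rfl <;> simp [Finsupp.single_apply]

lemma bih_X_y (i : Fin 4) (hi : i = 2 ∨ i = 3) : IsBihom 0 1 (X i : MvPolynomial (Fin 4) k) := by
  intro u hu
  have := MvPolynomial.support_X (R := k) (n := i) ▸ hu
  simp only [Finset.mem_singleton] at this
  subst this
  rcases hi with rfl | rfl <;> simp [Finsupp.single_apply]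

lemma eq2_symm_apply (a b : Fin 4) (hab : a ≠ b) (α β α' β' : k) (hdet : α * β' - β * α' = 1)
    (P : MvPolynomial (Fin 4) k) :
    (eq2 a b hab α β α' β' hdet).symm P
      = aeval (subv a b (C β' * X a + C (-β) * X b) (C (-α') * X a + C α * X b)) P := rfl

/-- bihomogeneity transport along an x-side `eq2` (variables 0,1) and its inverse. -/
lemma bih_eq2x {c d : ℕ} (hab : (0:Fin 4) ≠ 1) (α β α' β' : k) (hdet : α * β' - β * α' = 1)
    {P : MvPolynomial (Fin 4) k} (hP : IsBihom c d P) :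
    IsBihom c d (eq2 0 1 hab α β α' β' hdet P) := by
  rw [eq2_apply]
  refine bih_aeval ?_ ?_ ?_ ?_ hP
  · rw [subv_a]; exact bih_lin01 _ _
  · rw [subv_b hab]; exact bih_lin01 _ _
  · rw [subv_other (by decide) (by decide)]; exact bih_X_y _ (Or.inl rfl)
  · rw [subv_other (by decide) (by decide)]; exact bih_X_y _ (Or.inr rfl)

lemma bih_eq2y {c d : ℕ} (hab : (2:Fin 4) ≠ 3) (α β α' β' : k) (hdet : α * β' - β * α' = 1)
    {P : MvPolynomial (Fin 4) k} (hP : IsBihom c d P) :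
    IsBihom c d (eq2 2 3 hab α β α' β' hdet P) := by
  rw [eq2_apply]
  refine bih_aeval ?_ ?_ ?_ ?_ hP
  · rw [subv_other (by decide) (by decide)]; exact bih_X_x _ (Or.inl rfl)
  · rw [subv_other (by decide) (by decide)]; exact bih_X_x _ (Or.inr rfl)
  · rw [subv_a]; exact bih_lin23 _ _
  · rw [subv_b hab]; exact bih_lin23 _ _

lemma bih_eq2x_symm {c d : ℕ} (hab : (0:Fin 4) ≠ 1) (α β α' β' : k) (hdet : α * β' - β * α' = 1)
    {P : MvPolynomial (Fin 4) k} (hP : IsBihom c d P) :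
    IsBihom c d ((eq2 0 1 hab α β α' β' hdet).symm P) := by
  rw [eq2_symm_apply]
  refine bih_aeval ?_ ?_ ?_ ?_ hP
  · rw [subv_a]; exact bih_lin01 _ _
  · rw [subv_b hab]; exact bih_lin01 _ _
  · rw [subv_other (by decide) (by decide)]; exact bih_X_y _ (Or.inl rfl)
  · rw [subv_other (by decide) (by decide)]; exact bih_X_y _ (Or.inr rfl)

lemma bih_eq2y_symm {c d : ℕ} (hab : (2:Fin 4) ≠ 3) (α β α' β' : k) (hdet : α * β' - β * α' = 1)
    {P : MvPolynomial (Fin 4) k} (hP : IsBihom c d P) :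
    IsBihom c d ((eq2 2 3 hab α β α' β' hdet).symm P) := by
  rw [eq2_symm_apply]
  refine bih_aeval ?_ ?_ ?_ ?_ hP
  · rw [subv_other (by decide) (by decide)]; exact bih_X_x _ (Or.inl rfl)
  · rw [subv_other (by decide) (by decide)]; exact bih_X_x _ (Or.inr rfl)
  · rw [subv_a]; exact bih_lin23 _ _
  · rw [subv_b hab]; exact bih_lin23 _ _

/-- the coordinate swap `x ↔ y`. -/
def tsw : Fin 4 ≃ Fin 4 := ⟨![2,3,0,1], ![2,3,0,1], by decide, by decide⟩

lemma bih_rename_swap {c d : ℕ} {P : MvPolynomial (Fin 4) k} (h : IsBihom c d P) :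
    IsBihom d c (rename tsw P) := by
  classical
  intro u hu
  rw [support_rename_of_injective tsw.injective] at hu
  rcases Finset.mem_image.mp hu with ⟨w, hw, rfl⟩
  obtain ⟨e1, e2⟩ := h w hw
  have q0 : Finsupp.mapDomain tsw w 0 = w 2 := by
    rw [show (0 : Fin 4) = tsw 2 from rfl, Finsupp.mapDomain_apply tsw.injective]
  have q1 : Finsupp.mapDomain tsw w 1 = w 3 := by
    rw [show (1 : Fin 4) = tsw 3 from rfl, Finsupp.mapDomain_apply tsw.injective]
  have q2 : Finsupp.mapDomain tsw w 2 = w 0 := by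
    rw [show (2 : Fin 4) = tsw 0 from rfl, Finsupp.mapDomain_apply tsw.injective]
  have q3 : Finsupp.mapDomain tsw w 3 = w 1 := by
    rw [show (3 : Fin 4) = tsw 1 from rfl, Finsupp.mapDomain_apply tsw.injective]
  rw [q0, q1, q2, q3]
  exact ⟨e2, e1⟩

end SepProof

theorem separator_degree_bound_ACM_fat_points
    {k : Type*} [Field k] [IsAlgClosed k] [CharZero k]
    (a b : ℕ)
    (L : Fin a → MvPolynomial (Fin 4) k)
    (hL0 : ∀ s, L s ≠ 0) (hLdeg : ∀ s, IsBihom 1 0 (L s))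
    (hLnp : ∀ s t, s ≠ t → NonPropPoly (L s) (L t))
    (R : Fin b → MvPolynomial (Fin 4) k)
    (hR0 : ∀ t, R t ≠ 0) (hRdeg : ∀ t, IsBihom 0 1 (R t))
    (hRnp : ∀ s t, s ≠ t → NonPropPoly (R s) (R t))
    (m : Fin a → Fin b → ℕ)
    (hACM : ∀ (s t : Fin a) (h h' : ℕ),
      (∀ j : Fin b, m t j - h' ≤ m s j - h) ∨ (∀ j : Fin b, m s j - h ≤ m t j - h'))
    (i : Fin a) (j : Fin b) (hij : 1 ≤ m i j)
    (c d : ℕ) (F : MvPolynomial (Fin 4) k) (hF : IsBihom c d F)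
    (hF1 : F ∈ ⨅ (s : Fin a) (t : Fin b)
      (_ : 1 ≤ (if s = i ∧ t = j then m i j - 1 else m s t)),
      (Ideal.span {L s, R t}) ^ (if s = i ∧ t = j then m i j - 1 else m s t))
    (hF2 : F ∉ ⨅ (s : Fin a) (t : Fin b) (_ : 1 ≤ m s t),
      (Ideal.span {L s, R t}) ^ (m s t)) :
    ∃ ℓ < m i j,
      (∑ s, (m s j - (m i j - 1 - ℓ))) - 1 ≤ c ∧ (∑ p, (m i p - ℓ)) - 1 ≤ d := by
  classical
  haveI : Infinite k := Infinite.of_injective (fun n : ℕ => (n : k)) Nat.cast_injective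
  open SepProof in
  -- unpack the intersection hypotheses
  simp only [Ideal.mem_iInf] at hF1
  have Hmem : ∀ s t, ¬(s = i ∧ t = j) → 1 ≤ m s t →
      F ∈ Ideal.span {L s, R t} ^ (m s t) := by
    intro s t hst hmst
    have h1 := hF1 s t
    rw [if_neg hst] at h1
    exact h1 hmst
  have Hprev : F ∈ Ideal.span {L i, R j} ^ (m i j - 1) := by
    by_cases h2 : 2 ≤ m i j
    · have h1 := hF1 i j
      rw [if_pos ⟨rfl, rfl⟩] at h1
      exact h1 (by omega)
    · have h1 : m i j - 1 = 0 := by omega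
      rw [h1, pow_zero, Ideal.one_eq_top]
      exact Submodule.mem_top
  have Hnot : F ∉ Ideal.span {L i, R j} ^ (m i j) := by
    intro hmem0
    apply hF2
    simp only [Ideal.mem_iInf]
    intro s t hst
    by_cases hij' : s = i ∧ t = j
    · obtain ⟨rfl, rfl⟩ := hij'
      exact hmem0
    · exact Hmem s t hij' hst
  -- the global change of coordinates
  set A : k := coeff (Finsupp.single 0 1) (L i) with hA
  set B : k := coeff (Finsupp.single 1 1) (L i) with hB
  have hLi : L i = C A * X 0 + C B * X 1 :=
    form_decomp (bihom_support_single (hLdeg i)) (by decide)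
  have hAB : ¬(A = 0 ∧ B = 0) := by
    rintro ⟨h1, h2⟩
    apply hL0 i
    rw [hLi, h1, h2]
    simp
  obtain ⟨A', B', detx⟩ := exists_det hAB
  set Γ : k := coeff (Finsupp.single 2 1) (R j) with hΓ
  set Δ : k := coeff (Finsupp.single 3 1) (R j) with hΔ
  have hRj : R j = C Γ * X 2 + C Δ * X 3 :=
    form_decomp (bihom_support_single' (hRdeg j)) (by decide)
  have hΓΔ : ¬(Γ = 0 ∧ Δ = 0) := by
    rintro ⟨h1, h2⟩
    apply hR0 j
    rw [hRj, h1, h2]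
    simp
  obtain ⟨Γ', Δ', dety⟩ := exists_det hΓΔ
  set Φx := eq2 0 1 (by decide) A B A' B' detx with hΦx
  set Φy := eq2 2 3 (by decide) Γ Δ Γ' Δ' dety with hΦy
  set Ψ : MvPolynomial (Fin 4) k ≃ₐ[k] MvPolynomial (Fin 4) k := Φy.trans Φx with hΨ
  have hΨap : ∀ P, Ψ P = Φx (Φy P) := fun P => rfl
  have hΨsap : ∀ P, Ψ.symm P = Φy.symm (Φx.symm P) := fun P => rfl
  have hΨX0 : Ψ (X 0) = L i := by
    rw [hΨap, hΦy, eq2_X_other _ _ _ _ _ _ _ _ _ (by decide) (by decide), hΦx, eq2_X_a, ← hLi]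
  have hΨX2 : Ψ (X 2) = R j := by
    rw [hΨap, hΦy, eq2_X_a, hΦx, eq2_apply]
    rw [map_add, map_mul, map_mul, aeval_C, aeval_C, aeval_X, aeval_X,
      subv_other (show (2:Fin 4) ≠ 0 by decide) (show (2:Fin 4) ≠ 1 by decide),
      subv_other (show (3:Fin 4) ≠ 0 by decide) (show (3:Fin 4) ≠ 1 by decide),
      algebraMap_eq]
    exact hRj.symm
  set G := Ψ.symm F with hG
  set Λ : Fin a → MvPolynomial (Fin 4) k := fun s => Ψ.symm (L s) with hΛ
  set Ρ : Fin b → MvPolynomial (Fin 4) k := fun p => Ψ.symm (R p) with hΡ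
  have hΛI : Λ i = X 0 := by
    rw [hΛ]
    simp only
    rw [← hΨX0, AlgEquiv.symm_apply_apply]
  have hΡJ : Ρ j = X 2 := by
    rw [hΡ]
    simp only
    rw [← hΨX2, AlgEquiv.symm_apply_apply]
  have hsymm_bih : ∀ (c' d' : ℕ) (P : MvPolynomial (Fin 4) k),
      IsBihom c' d' P → IsBihom c' d' (Ψ.symm P) := by
    intro c' d' P hP
    rw [hΨsap, hΦy, hΦx]
    exact bih_eq2y_symm _ _ _ _ _ _ (bih_eq2x_symm _ _ _ _ _ _ hP)
  have hGbih : IsBihom c d G := hsymm_bih c d F hF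
  have hΛbih : ∀ s, IsBihom 1 0 (Λ s) := fun s => hsymm_bih 1 0 _ (hLdeg s)
  have hΡbih : ∀ p, IsBihom 0 1 (Ρ p) := fun p => hsymm_bih 0 1 _ (hRdeg p)
  -- transports of nonproportionality
  have hΛnp : ∀ s s', s ≠ s' → ∀ γ : k, Λ s ≠ γ • Λ s' := by
    intro s s' hne γ heq
    refine (hLnp s s' hne).1 γ ?_
    have h2 : Ψ (Ψ.symm (L s)) = Ψ (γ • Ψ.symm (L s')) := congrArg Ψ heq
    rw [map_smul, AlgEquiv.apply_symm_apply, AlgEquiv.apply_symm_apply] at h2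
    exact h2
  have hΡnp : ∀ p p', p ≠ p' → ∀ γ : k, Ρ p ≠ γ • Ρ p' := by
    intro p p' hne γ heq
    refine (hRnp p p' hne).1 γ ?_
    have h2 : Ψ (Ψ.symm (R p)) = Ψ (γ • Ψ.symm (R p')) := congrArg Ψ heq
    rw [map_smul, AlgEquiv.apply_symm_apply, AlgEquiv.apply_symm_apply] at h2
    exact h2
  -- transported memberships
  have HmemG : ∀ s t, ¬(s = i ∧ t = j) → 1 ≤ m s t →
      G ∈ Ideal.span {Λ s, Ρ t} ^ (m s t) := fun s t hst hm =>
    mem_span_pair_pow_map Ψ.symm (Hmem s t hst hm)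
  have HprevG : G ∈ Ideal.span {(X 0 : MvPolynomial (Fin 4) k), X 2} ^ (m i j - 1) := by
    have h1 := mem_span_pair_pow_map Ψ.symm Hprev
    rwa [show Ψ.symm (L i) = X 0 from hΛI, show Ψ.symm (R j) = X 2 from hΡJ] at h1
  have HnotG : G ∉ Ideal.span {(X 0 : MvPolynomial (Fin 4) k), X 2} ^ (m i j) := by
    intro hmem0
    apply Hnot
    have h1 := mem_span_pair_pow_map Ψ hmem0
    rwa [hΨX0, hΨX2, show Ψ G = F from Ψ.apply_symm_apply F] at h1
  -- choice of the critical monomial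
  have hexist : ∃ u ∈ G.support, u 0 + u 2 < m i j := by
    by_contra hcon
    push_neg at hcon
    exact HnotG ((mem_span_pow_iff (by decide)).mpr fun u hu => hcon u hu)
  obtain ⟨sstar, hsmem, hslt⟩ := hexist
  have hcrit := (mem_span_pow_iff (by decide)).mp HprevG
  have hsum : sstar 0 + sstar 2 = m i j - 1 := by
    have := hcrit sstar hsmem
    omega
  set h := sstar 0 with hh
  set ℓ := sstar 2 with hℓ
  -- first application: the bound on c
  have hminG : ∀ u ∈ G.support, h + ℓ ≤ u 0 + u 2 := by
    intro u hu
    have := hcrit u hu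
    omega
  have c1 : h + ∑ s ∈ Finset.univ.erase i, (m s j - ℓ) ≤ c := by
    refine cbound hGbih hsmem rfl rfl hminG (Finset.univ.erase i) Λ (fun s => m s j - ℓ)
      (fun s _ => hΛbih s) ?_ ?_ ?_
    · intro s hsmem' γ heq
      have hsne : s ≠ i := Finset.ne_of_mem_erase hsmem'
      refine hΛnp s i hsne γ ?_
      rwa [hΛI]
    · intro s hs s' hs' hne γ
      exact hΛnp s s' hne γ
    · intro s hsmem' ht
      replace ht : 1 ≤ m s j - ℓ := ht
      have hsne : s ≠ i := Finset.ne_of_mem_erase hsmem'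
      have h1 := HmemG s j (fun hc => hsne hc.1) (by omega)
      rw [hΡJ] at h1
      rwa [show (m s j - ℓ) + ℓ = m s j by omega]
  -- second application: the bound on d, after swapping the coordinates
  set G' := rename tsw G with hG'
  have hbih' : IsBihom d c G' := bih_rename_swap hGbih
  have hs'mem : Finsupp.mapDomain tsw sstar ∈ G'.support := by
    rw [hG', support_rename_of_injective tsw.injective]
    exact Finset.mem_image_of_mem _ hsmem
  have q0 : Finsupp.mapDomain tsw sstar 0 = ℓ := by
    rw [show (0 : Fin 4) = tsw 2 from rfl, Finsupp.mapDomain_apply tsw.injective]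
  have q2 : Finsupp.mapDomain tsw sstar 2 = h := by
    rw [show (2 : Fin 4) = tsw 0 from rfl, Finsupp.mapDomain_apply tsw.injective]
  have hminG' : ∀ u ∈ G'.support, ℓ + h ≤ u 0 + u 2 := by
    intro u hu
    rw [hG', support_rename_of_injective tsw.injective] at hu
    rcases Finset.mem_image.mp hu with ⟨w, hw, rfl⟩
    have r0 : Finsupp.mapDomain tsw w 0 = w 2 := by
      rw [show (0 : Fin 4) = tsw 2 from rfl, Finsupp.mapDomain_apply tsw.injective]
    have r2 : Finsupp.mapDomain tsw w 2 = w 0 := by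
      rw [show (2 : Fin 4) = tsw 0 from rfl, Finsupp.mapDomain_apply tsw.injective]
    rw [r0, r2]
    have := hminG w hw
    omega
  set Λ' : Fin b → MvPolynomial (Fin 4) k := fun p => rename tsw (Ρ p) with hΛ'
  have hrenX0 : (rename tsw) (X (2:Fin 4) : MvPolynomial (Fin 4) k) = X 0 := by
    rw [rename_X]; rfl
  have hΛ'bih : ∀ p, IsBihom 1 0 (Λ' p) := fun p => bih_rename_swap (hΡbih p)
  have hΛ'np : ∀ p p', p ≠ p' → ∀ γ : k, Λ' p ≠ γ • Λ' p' := by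
    intro p p' hne γ heq
    refine hΡnp p p' hne γ ?_
    have hinj := MvPolynomial.rename_injective (R := k) tsw tsw.injective
    apply hinj
    rw [hΛ'] at heq
    simp only at heq
    rw [heq]
    exact (map_smul (rename tsw : MvPolynomial (Fin 4) k →ₐ[k] MvPolynomial (Fin 4) k) γ _).symm
  have d1 : ℓ + ∑ p ∈ Finset.univ.erase j, (m i p - h) ≤ d := by
    refine cbound hbih' hs'mem q0 q2 hminG' (Finset.univ.erase j) Λ' (fun p => m i p - h)
      (fun p _ => hΛ'bih p) ?_ ?_ ?_
    · intro p hpmem γ heq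
      have hpne : p ≠ j := Finset.ne_of_mem_erase hpmem
      refine hΛ'np p j hpne γ ?_
      rw [hΛ']
      simp only
      rwa [hΡJ, hrenX0]
    · intro p hp p' hp' hne γ
      exact hΛ'np p p' hne γ
    · intro p hpmem ht
      replace ht : 1 ≤ m i p - h := ht
      have hpne : p ≠ j := Finset.ne_of_mem_erase hpmem
      have h1 := HmemG i p (fun hc => hpne hc.2) (by omega)
      rw [hΛI] at h1
      have h2 := mem_span_pair_pow_map (renameEquiv k tsw) h1
      rw [show (m i p - h) + h = m i p by omega, Set.pair_comm]
      have h4 : (renameEquiv k tsw) (X (0:Fin 4) : MvPolynomial (Fin 4) k) = X 2 := by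
        rw [show ((renameEquiv k tsw) (X (0:Fin 4) : MvPolynomial (Fin 4) k))
          = rename tsw (X 0) from rfl, rename_X]
        rfl
      rw [h4] at h2
      exact h2
  -- conclusion
  refine ⟨h, by omega, ?_, ?_⟩
  · have e1 : ∀ s : Fin a, m s j - (m i j - 1 - h) = m s j - ℓ := by
      intro s; congr 1; omega
    rw [Finset.sum_congr rfl fun s _ => e1 s]
    rw [← Finset.add_sum_erase _ _ (Finset.mem_univ i)]
    have e2 : m i j - ℓ = h + 1 := by omega
    omega
  · rw [← Finset.add_sum_erase _ _ (Finset.mem_univ j)]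
    have e2 : m i j - h = ℓ + 1 := by omega
    omega
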